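/- Let H be a connected bipartite graph with minimum degree at least 2 that is not isomorphic to any complete bipartite graph K_{2,m} (m ≥ 1). If H contains K_{2,4} = θ_{2,2,2,2} as a subgraph and does not contain any Γ_{2p,2q,r} with p,q ≥ 2 and r ≥ 0 as a partial induced subgraph, then H contains θ_{2,2,2,2m} for some m ≥ 2 as a partial induced subgraph. -/

import Mathlib

open SimpleGraph

/-- A list coloring: proper coloring with each vertex colored from its list. -/
def IsListColoring {V : Type*} (G : SimpleGraph V) (L : V → Finset ℕ) (c : V → ℕ) : Prop :=
  (∀ v, c v ∈ L v) ∧ ∀ u v, G.Adj u v → c u ≠ c v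

/-- A list assignment is feasible if some list coloring exists. -/
def Feasible {V : Type*} (G : SimpleGraph V) (L : V → Finset ℕ) : Prop :=
  ∃ c, IsListColoring G L c

/-- `[f,k]`-choosability: every list assignment with colors in `{1,…,k}` and
list sizes given by `f` is feasible. -/
def ChoosableF {V : Type*} (G : SimpleGraph V) (f : V → ℕ) (k : ℕ) : Prop :=
  ∀ L : V → Finset ℕ, (∀ v, L v ⊆ Finset.Icc 1 k) → (∀ v, (L v).card = f v) →
    Feasible G L

/-- `[ℓ,k]`-choosability. -/
def Choosable {V : Type*} (G : SimpleGraph V) (ℓ k : ℕ) : Prop :=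
  ChoosableF G (fun _ => ℓ) k

/-- Ideal `[ℓ,k]`-choosability: any color of any vertex's list can be extended
to a full list coloring. -/
def IdeallyChoosable {V : Type*} (G : SimpleGraph V) (ℓ k : ℕ) : Prop :=
  ∀ L : V → Finset ℕ, (∀ v, L v ⊆ Finset.Icc 1 k) → (∀ v, (L v).card = ℓ) →
    ∀ v₀ : V, ∀ c ∈ L v₀, ∃ col, IsListColoring G L col ∧ col v₀ = c

/-- A block: a maximal (vertex) set inducing a connected subgraph with no cut vertex. -/
def IsBlock {V : Type*} (G : SimpleGraph V) (B : Set V) : Prop :=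
  ((G.induce B).Connected ∧ ∀ v ∈ B, (G.induce (B \ {v})).Preconnected) ∧
  ∀ B' : Set V, B ⊆ B' →
    ((G.induce B').Connected ∧ ∀ v ∈ B', (G.induce (B' \ {v})).Preconnected) → B' = B

/-- `P` is contained in `H` as a subgraph (equivalently, as a partial induced
subgraph): there is a map of vertices, injective on the support of `P`
(`P` has no isolated vertices in our uses), preserving adjacency. -/
def ContainsSub {W V : Type*} (H : SimpleGraph V) (P : SimpleGraph W) : Prop :=
  ∃ f : W → V, Set.InjOn f P.support ∧ ∀ a b : W, P.Adj a b → H.Adj (f a) (f b)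

/-- The theta graph `θ_{2,2,2,d}` (for `d ≥ 2`), on vertex labels `0,…,d+3` of `ℕ`:
hubs `0,1`, midpoints `2,3,4` of the three paths of length 2, and internal path
vertices `5,…,d+3` of the path of length `d` between the hubs. -/
def theta4 (d : ℕ) : SimpleGraph ℕ :=
  SimpleGraph.fromEdgeSet
    ({s(0, 2), s(1, 2), s(0, 3), s(1, 3), s(0, 4), s(1, 4), s(0, 5), s(d + 3, 1)} ∪
      {e : Sym2 ℕ | ∃ i : ℕ, 5 ≤ i ∧ i < d + 3 ∧ e = s(i, i + 1)})

/-- The graph `Γ_{cp,cq,r}`: two disjoint cycles of lengths `cp` and `cq` joined by a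
path of length `r` (sharing one vertex when `r = 0`), on vertex labels in `ℕ`.
The first cycle uses labels `0,…,cp-1`; `Pv j` is the `j`-th vertex of the
connecting path and `Cv i` the `i`-th vertex of the second cycle. -/
def gammaG (cp cq r : ℕ) : SimpleGraph ℕ :=
  let Pv : ℕ → ℕ := fun j => if j = 0 then 0 else cp - 1 + j
  let Cv : ℕ → ℕ := fun i => if i = 0 then Pv r else cp + r - 1 + i
  SimpleGraph.fromEdgeSet
    ({e : Sym2 ℕ | ∃ i : ℕ, i < cp ∧ e = s(i, (i + 1) % cp)} ∪
      {e : Sym2 ℕ | ∃ j : ℕ, j < r ∧ e = s(Pv j, Pv (j + 1))} ∪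
      {e : Sym2 ℕ | ∃ i : ℕ, i < cq ∧ e = s(Cv i, Cv ((i + 1) % cq))})

open SimpleGraph

namespace ThetaAux

variable {V : Type*} {G : SimpleGraph V}

lemma getVert_mem_support' {a b : V} (p : G.Walk a b) (n : ℕ) (hn : n ≤ p.length) :
    p.getVert n ∈ p.support :=
  SimpleGraph.Walk.mem_support_iff_exists_getVert.mpr ⟨n, rfl, hn⟩

lemma getVert_injOn' {a b : V} {p : G.Walk a b} (hp : p.IsPath) :
    ∀ i, i ≤ p.length → ∀ j, j ≤ p.length → p.getVert i = p.getVert j → i = j := by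
  induction p with
  | nil => intro i hi j hj _; simp at hi hj; omega
  | cons h q ih =>
    rw [Walk.cons_isPath_iff] at hp
    intro i hi j hj hij
    match i, j with
    | 0, 0 => rfl
    | 0, j+1 =>
      exfalso
      rw [Walk.getVert_zero, Walk.getVert_cons_succ] at hij
      exact hp.2 (by rw [hij]; exact getVert_mem_support' q j (by simpa using hj))
    | i+1, 0 =>
      exfalso
      rw [Walk.getVert_zero, Walk.getVert_cons_succ] at hij
      exact hp.2 (by rw [← hij]; exact getVert_mem_support' q i (by simpa using hi))
    | i+1, j+1 =>
      rw [Walk.getVert_cons_succ, Walk.getVert_cons_succ] at hij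
      have := ih hp.1 i (by simpa using hi) j (by simpa using hj) hij
      omega

lemma endpoints_eq_of_length_zero {a b : V} (p : G.Walk a b) (h : p.length = 0) : a = b := by
  have h1 := p.getVert_length
  rw [h] at h1
  exact p.getVert_zero.symm.trans h1

lemma walk_parity {s : Set V} (hs : ∀ u w : V, G.Adj u w → (u ∈ s ↔ w ∉ s))
    {a b : V} (p : G.Walk a b) : ((a ∈ s) ↔ (b ∈ s)) ↔ Even p.length := by
  induction p with
  | nil => simp
  | cons h q ih =>
    have := hs _ _ h
    rw [Walk.length_cons, Nat.even_add_one, ← ih]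
    tauto

lemma isPath_concat {a b c : V} {p : G.Walk a b} (hp : p.IsPath) (h : G.Adj b c)
    (hc : c ∉ p.support) : (p.concat h).IsPath := by
  rw [← Walk.isPath_reverse_iff, Walk.reverse_concat]
  exact (p.isPath_reverse_iff.mpr hp).cons (by simpa using hc)

lemma mem_support_concat {a b c z : V} {p : G.Walk a b} {h : G.Adj b c} :
    z ∈ (p.concat h).support ↔ z ∈ p.support ∨ z = c := by
  rw [Walk.support_concat, List.mem_append, List.mem_singleton]

lemma avoid_append {a b c z : V} {p : G.Walk a b} {q : G.Walk b c}
    (h1 : z ∉ p.support) (h2 : z ∉ q.support) : z ∉ (p.append q).support := by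
  rw [Walk.support_append]
  intro h
  rcases List.mem_append.mp h with h | h
  · exact h1 h
  · exact h2 (List.mem_of_mem_tail h)

lemma avoid_reverse {a b z : V} {p : G.Walk a b} (h1 : z ∉ p.support) :
    z ∉ p.reverse.support := by
  rwa [Walk.support_reverse, List.mem_reverse]

lemma crossing {T : Set V} {a b : V} (p : G.Walk a b) (ha : a ∉ T) (hb : b ∈ T) :
    ∃ y z, G.Adj y z ∧ y ∉ T ∧ z ∈ T := by
  classical
  induction p with
  | nil => exact absurd hb ha
  | @cons a a' b h q ih =>
    by_cases h2 : a' ∈ T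
    · exact ⟨a, a', h, ha, h2⟩
    · exact ih h2 hb

def IsCycleOn (G : SimpleGraph V) (c : ℕ → V) (n : ℕ) : Prop :=
  (∀ i, i + 1 < n → G.Adj (c i) (c (i + 1))) ∧ G.Adj (c (n - 1)) (c 0) ∧
    Set.InjOn c (Set.Iio n)

lemma IsCycleOn.adj_mod {c : ℕ → V} {n : ℕ} (hc : IsCycleOn G c n)
    {i : ℕ} (hi : i < n) : G.Adj (c i) (c ((i + 1) % n)) := by
  by_cases h : i + 1 < n
  · rw [Nat.mod_eq_of_lt h]; exact hc.1 i h
  · have h1 : i + 1 = n := by omega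
    have h2 : (i + 1) % n = 0 := by rw [h1, Nat.mod_self]
    have h3 : i = n - 1 := by omega
    rw [h2, h3]; exact hc.2.1

lemma IsCycleOn.rotate {c : ℕ → V} {n : ℕ} (hc : IsCycleOn G c n)
    (i0 : ℕ) (hi0 : i0 < n) : IsCycleOn G (fun i => c ((i + i0) % n)) n := by
  have hn : 1 ≤ n := by omega
  refine ⟨?_, ?_, ?_⟩
  · intro i hi
    simp only
    have h1 : (i + 1 + i0) % n = ((i + i0) % n + 1) % n := by
      rw [Nat.mod_add_mod]; congr 1; omega
    rw [h1]
    exact hc.adj_mod (Nat.mod_lt _ (by omega))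
  · simp only
    have h1 : (0 + i0) % n = ((n - 1 + i0) % n + 1) % n := by
      rw [Nat.mod_add_mod]
      have : n - 1 + i0 + 1 = n + i0 := by omega
      rw [this, Nat.add_mod_left, Nat.zero_add]
    rw [h1]
    exact hc.adj_mod (Nat.mod_lt _ (by omega))
  · intro i hi j hj hij
    simp only at hij
    have h1 : (i + i0) % n = (j + i0) % n :=
      hc.2.2 (Set.mem_Iio.mpr (Nat.mod_lt _ (by omega)))
        (Set.mem_Iio.mpr (Nat.mod_lt _ (by omega))) hij
    have h2 : i % n = j % n := Nat.ModEq.add_right_cancel' i0 h1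
    simp only [Set.mem_Iio] at hi hj
    rwa [Nat.mod_eq_of_lt hi, Nat.mod_eq_of_lt hj] at h2

lemma IsCycleOn.even {s : Set V} (hs : ∀ u w : V, G.Adj u w → (u ∈ s ↔ w ∉ s))
    {c : ℕ → V} {n : ℕ} (hc : IsCycleOn G c n) (hn : 3 ≤ n) : Even n := by
  have key : ∀ i, i < n → (((c 0 ∈ s) ↔ (c i ∈ s)) ↔ Even i) := by
    intro i
    induction i with
    | zero => simp
    | succ i ih =>
      intro hi
      have h1 := ih (by omega)
      have h2 := hs _ _ (hc.1 i hi)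
      rw [Nat.even_add_one, ← h1]
      tauto
  have h1 := key (n - 1) (by omega)
  have h2 := hs _ _ hc.2.1
  have h3 : ¬ Even (n - 1) := by rw [← h1]; tauto
  rcases Nat.even_or_odd n with h | h
  · exact h
  · exfalso; apply h3; rcases h with ⟨k, hk⟩; exact ⟨k, by omega⟩

lemma four_cycle {p q y z : V} (h1 : G.Adj p y) (h2 : G.Adj q y) (h3 : G.Adj p z)
    (h4 : G.Adj q z) (hpq : p ≠ q) (hyz : y ≠ z) :
    IsCycleOn G (fun j => if j = 0 then p else if j = 1 then y else if j = 2 then q else z) 4 := by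
  have d1 : p ≠ y := h1.ne
  have d2 : q ≠ y := h2.ne
  have d3 : p ≠ z := h3.ne
  have d4 : q ≠ z := h4.ne
  refine ⟨?_, ?_, ?_⟩
  · intro i hi
    have hi3 : i < 3 := by omega
    interval_cases i
    · simpa using h1
    · simpa using h2.symm
    · simpa using h4
  · simpa using h3.symm
  · intro i hi j hj heq
    simp only [Set.mem_Iio] at hi hj
    simp only at heq
    interval_cases i <;> interval_cases j <;> simp_all

def PvF (cp : ℕ) : ℕ → ℕ := fun j => if j = 0 then 0 else cp - 1 + j
def CvF (cp r : ℕ) : ℕ → ℕ := fun i => if i = 0 then PvF cp r else cp + r - 1 + i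

lemma gammaG_adj {cp cq r : ℕ} {a b : ℕ} (h : (gammaG cp cq r).Adj a b) :
    (∃ i, i < cp ∧ s(a, b) = s(i, (i + 1) % cp)) ∨
    (∃ j, j < r ∧ s(a, b) = s(PvF cp j, PvF cp (j + 1))) ∨
    (∃ i, i < cq ∧ s(a, b) = s(CvF cp r i, CvF cp r ((i + 1) % cq))) := by
  rw [gammaG, fromEdgeSet_adj] at h
  simpa [PvF, CvF, Set.mem_union, or_assoc] using h.1

lemma gamma_embed {c d : ℕ → V} {n k r : ℕ} {p : ℕ → V}
    (hc : IsCycleOn G c n) (hd : IsCycleOn G d k)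
    (hn : 4 ≤ n) (hk : 4 ≤ k)
    (hp0 : p 0 = c 0) (hpr : p r = d 0)
    (hpadj : ∀ j, j < r → G.Adj (p j) (p (j + 1)))
    (hpinj : Set.InjOn p (Set.Iic r))
    (hpc : ∀ j, 0 < j → j ≤ r → ∀ i, i < n → p j ≠ c i)
    (hpd : ∀ j, j < r → ∀ i, i < k → p j ≠ d i)
    (hcd : ∀ i, i < n → ∀ j, j < k → c i = d j → r = 0 ∧ i = 0 ∧ j = 0) :
    ContainsSub G (gammaG n k r) := by
  classical
  set g : ℕ → V := fun m =>
    if m < n then c m else if m ≤ n - 1 + r then p (m - (n - 1)) else d (m - (n + r - 1)) with hg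
  have hg1 : ∀ i, i < n → g i = c i := fun i hi => if_pos hi
  have hg2 : ∀ j, j ≤ r → g (PvF n j) = p j := by
    intro j hj
    by_cases h0 : j = 0
    · subst h0
      have h1 : PvF n 0 = 0 := by simp [PvF]
      rw [h1, hg]; simp only
      rw [if_pos (by omega), hp0]
    · have h1 : PvF n j = n - 1 + j := by simp only [PvF]; rw [if_neg h0]
      rw [h1, hg]; simp only
      rw [if_neg (by omega), if_pos (by omega)]
      congr 1; omega
  have hg3 : ∀ i, i < k → g (CvF n r i) = d i := by
    intro i hi
    by_cases h0 : i = 0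
    · subst h0
      have h1 : CvF n r 0 = PvF n r := by simp [CvF]
      rw [h1, hg2 r le_rfl, hpr]
    · have h1 : CvF n r i = n + r - 1 + i := by simp only [CvF]; rw [if_neg h0]
      rw [h1, hg]; simp only
      rw [if_neg (by omega), if_neg (by omega)]
      congr 1; omega
  -- the blocks
  have hval1 : ∀ m, m < n → g m = c m := hg1
  have hval2 : ∀ m, n ≤ m → m ≤ n - 1 + r → g m = p (m - (n - 1)) := by
    intro m h1 h2; rw [hg]; simp only
    rw [if_neg (by omega), if_pos h2]
  have hval3 : ∀ m, n + r ≤ m → g m = d (m - (n + r - 1)) := by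
    intro m h1; rw [hg]; simp only
    rw [if_neg (by omega), if_neg (by omega)]
  refine ⟨g, ?_, ?_⟩
  · -- injectivity on support
    have hsub : (gammaG n k r).support ⊆
        {m | m < n ∨ (n ≤ m ∧ m ≤ n - 1 + r) ∨ (n + r ≤ m ∧ m ≤ n + r + k - 2)} := by
      intro z hz
      simp only [Set.mem_setOf_eq]
      obtain ⟨y, hy⟩ := hz
      have := gammaG_adj hy
      rcases this with ⟨i, hi, he⟩ | ⟨j, hj, he⟩ | ⟨i, hi, he⟩
      · rw [Sym2.eq_iff] at he
        have : z = i ∨ z = (i + 1) % n := by tauto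
        have h2 : (i + 1) % n < n := Nat.mod_lt _ (by omega)
        left; omega
      · rw [Sym2.eq_iff] at he
        have : z = PvF n j ∨ z = PvF n (j + 1) := by tauto
        simp only [PvF] at this
        rcases this with h | h <;> split_ifs at h <;> omega
      · rw [Sym2.eq_iff] at he
        have : z = CvF n r i ∨ z = CvF n r ((i + 1) % k) := by tauto
        have h2 : (i + 1) % k < k := Nat.mod_lt _ (by omega)
        simp only [CvF, PvF] at this
        rcases this with h | h <;> split_ifs at h <;> omega
    refine Set.InjOn.mono hsub ?_
    intro m1 hm1 m2 hm2 heq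
    simp only [Set.mem_setOf_eq] at hm1 hm2
    -- helper distinctness facts
    have key : ∀ a1 a2 : ℕ,
        (a1 < n ∨ (n ≤ a1 ∧ a1 ≤ n - 1 + r) ∨ (n + r ≤ a1 ∧ a1 ≤ n + r + k - 2)) →
        (a2 < n ∨ (n ≤ a2 ∧ a2 ≤ n - 1 + r) ∨ (n + r ≤ a2 ∧ a2 ≤ n + r + k - 2)) →
        g a1 = g a2 → a1 ≤ a2 → a1 = a2 := by
      intro a1 a2 h1 h2 heq hle
      rcases h1 with h1 | ⟨h1, h1'⟩ | ⟨h1, h1'⟩ <;> rcases h2 with h2 | ⟨h2, h2'⟩ | ⟨h2, h2'⟩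
      · -- both in cycle c
        rw [hval1 _ h1, hval1 _ h2] at heq
        exact hc.2.2 (Set.mem_Iio.mpr h1) (Set.mem_Iio.mpr h2) heq
      · rw [hval1 _ h1, hval2 _ h2 h2'] at heq
        exact absurd heq.symm (hpc _ (by omega) (by omega) _ h1)
      · rw [hval1 _ h1, hval3 _ h2] at heq
        have hik : a2 - (n + r - 1) < k := by omega
        have := hcd _ h1 _ hik heq
        omega
      · omega
      · rw [hval2 _ h1 h1', hval2 _ h2 h2'] at heq
        have := hpinj (Set.mem_Iic.mpr (by omega : a1 - (n-1) ≤ r))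
          (Set.mem_Iic.mpr (by omega : a2 - (n-1) ≤ r)) heq
        omega
      · rw [hval2 _ h1 h1', hval3 _ h2] at heq
        by_cases hjr : a1 - (n - 1) < r
        · exact absurd heq (hpd _ hjr _ (by omega))
        · have hj : a1 - (n - 1) = r := by omega
          rw [hj, hpr] at heq
          have := hd.2.2 (Set.mem_Iio.mpr (by omega : (0:ℕ) < k))
            (Set.mem_Iio.mpr (by omega : a2 - (n + r - 1) < k)) heq
          omega
      · omega
      · omega
      · rw [hval3 _ h1, hval3 _ h2] at heq
        have := hd.2.2 (Set.mem_Iio.mpr (by omega : a1 - (n + r - 1) < k))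
          (Set.mem_Iio.mpr (by omega : a2 - (n + r - 1) < k)) heq
        omega
    rcases le_total m1 m2 with h | h
    · exact key m1 m2 hm1 hm2 heq h
    · exact (key m2 m1 hm2 hm1 heq.symm h).symm
  · -- adjacency
    intro a b hab
    rcases gammaG_adj hab with ⟨i, hi, he⟩ | ⟨j, hj, he⟩ | ⟨i, hi, he⟩
    · have h2 : (i + 1) % n < n := Nat.mod_lt _ (by omega)
      have hadj : G.Adj (g i) (g ((i + 1) % n)) := by
        rw [hg1 _ hi, hg1 _ h2]; exact hc.adj_mod hi
      rw [Sym2.eq_iff] at he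
      rcases he with ⟨ha, hb⟩ | ⟨ha, hb⟩ <;> subst ha <;> subst hb
      · exact hadj
      · exact hadj.symm
    · have hadj : G.Adj (g (PvF n j)) (g (PvF n (j + 1))) := by
        rw [hg2 _ (by omega), hg2 _ (by omega)]; exact hpadj _ hj
      rw [Sym2.eq_iff] at he
      rcases he with ⟨ha, hb⟩ | ⟨ha, hb⟩ <;> subst ha <;> subst hb
      · exact hadj
      · exact hadj.symm
    · have h2 : (i + 1) % k < k := Nat.mod_lt _ (by omega)
      have hadj : G.Adj (g (CvF n r i)) (g (CvF n r ((i + 1) % k))) := by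
        rw [hg3 _ hi, hg3 _ h2]; exact hd.adj_mod hi
      rw [Sym2.eq_iff] at he
      rcases he with ⟨ha, hb⟩ | ⟨ha, hb⟩ <;> subst ha <;> subst hb
      · exact hadj
      · exact hadj.symm


lemma theta4_adj {dd x y : ℕ} (h : (theta4 dd).Adj x y) :
    s(x,y) = s(0,2) ∨ s(x,y) = s(1,2) ∨ s(x,y) = s(0,3) ∨ s(x,y) = s(1,3) ∨
    s(x,y) = s(0,4) ∨ s(x,y) = s(1,4) ∨ s(x,y) = s(0,5) ∨ s(x,y) = s(dd+3,1) ∨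
    ∃ i, 5 ≤ i ∧ i < dd + 3 ∧ s(x,y) = s(i, i+1) := by
  rw [theta4, fromEdgeSet_adj] at h
  simpa [Set.mem_union, Set.mem_insert_iff, or_assoc] using h.1

set_option maxHeartbeats 1000000 in
lemma theta_embed {u v : V} (P : G.Walk u v) (hP : P.IsPath) {dd : ℕ} (hd4 : 4 ≤ dd)
    (hlen : P.length = dd) (a b c : V)
    (hab : a ≠ b) (hac : a ≠ c) (hbc : b ≠ c)
    (hau : G.Adj u a) (hav : G.Adj v a) (hbu : G.Adj u b) (hbv : G.Adj v b)
    (hcu : G.Adj u c) (hcv : G.Adj v c)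
    (hint : ∀ i, 1 ≤ i → i ≤ dd - 1 → P.getVert i ≠ a ∧ P.getVert i ≠ b ∧ P.getVert i ≠ c) :
    ContainsSub G (theta4 dd) := by
  classical
  have hV0 : P.getVert 0 = u := P.getVert_zero
  have hVd : P.getVert dd = v := by rw [← hlen]; exact P.getVert_length
  have huv : u ≠ v := by
    intro h
    have := getVert_injOn' hP 0 (by omega) dd (by omega) (by rw [hV0, hVd]; exact h)
    omega
  set g : ℕ → V := fun m =>
    if m = 0 then u else if m = 1 then v else if m = 2 then a else if m = 3 then b
    else if m = 4 then c else P.getVert (m - 4) with hg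
  have e0 : g 0 = u := by simp [hg]
  have e1 : g 1 = v := by simp [hg]
  have e2 : g 2 = a := by simp [hg]
  have e3 : g 3 = b := by simp [hg]
  have e4 : g 4 = c := by simp [hg]
  have e5 : ∀ m, 5 ≤ m → g m = P.getVert (m - 4) := by
    intro m hm
    rw [hg]; simp only
    rw [if_neg (by omega), if_neg (by omega), if_neg (by omega), if_neg (by omega),
      if_neg (by omega)]
  have hadj : ∀ i, i < dd → G.Adj (P.getVert i) (P.getVert (i+1)) := by
    intro i hi; exact P.adj_getVert_succ (by omega)
  refine ⟨g, ?_, ?_⟩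
  · have hsub : (theta4 dd).support ⊆ Set.Iio (dd + 4) := by
      intro z hz
      obtain ⟨y, hy⟩ := hz
      rcases theta4_adj hy with h|h|h|h|h|h|h|h|⟨i,hi1,hi2,h⟩ <;>
        rw [Sym2.eq_iff] at h <;> simp only [Set.mem_Iio] <;> omega
    refine Set.InjOn.mono hsub ?_
    intro m1 hm1 m2 hm2 heq
    simp only [Set.mem_Iio] at hm1 hm2
    -- distinctness facts
    have hne : ∀ i, 1 ≤ i → i ≤ dd - 1 →
        P.getVert i ≠ u ∧ P.getVert i ≠ v ∧ P.getVert i ≠ a ∧ P.getVert i ≠ b ∧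
          P.getVert i ≠ c := by
      intro i h1 h2
      refine ⟨?_, ?_, (hint i h1 h2).1, (hint i h1 h2).2.1, (hint i h1 h2).2.2⟩
      · intro h
        have := getVert_injOn' hP i (by omega) 0 (by omega) (h.trans hV0.symm); omega
      · intro h
        have := getVert_injOn' hP i (by omega) dd (by omega) (h.trans hVd.symm); omega
    have key : ∀ m1 m2, m1 < dd + 4 → m2 < dd + 4 → g m1 = g m2 → m1 ≤ m2 → m1 = m2 := by
      intro m1 m2 hm1 hm2 heq hle
      by_cases h5 : 5 ≤ m1
      · -- both ≥ 5
        have h5' : 5 ≤ m2 := by omega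
        rw [e5 _ h5, e5 _ h5'] at heq
        have := getVert_injOn' hP (m1 - 4) (by omega) (m2 - 4) (by omega) heq
        omega
      · by_cases h5' : 5 ≤ m2
        · exfalso
          rw [e5 _ h5'] at heq
          have hin := hne (m2 - 4) (by omega) (by omega)
          interval_cases m1 <;> simp_all
        · -- both < 5
          have h1 : m1 < 5 := by omega
          have h2 : m2 < 5 := by omega
          have d1 : u ≠ a := G.ne_of_adj hau
          have d2 : u ≠ b := G.ne_of_adj hbu
          have d3 : u ≠ c := G.ne_of_adj hcu
          have d4 : v ≠ a := G.ne_of_adj hav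
          have d5 : v ≠ b := G.ne_of_adj hbv
          have d6 : v ≠ c := G.ne_of_adj hcv
          interval_cases m1 <;> interval_cases m2 <;> simp only [e0, e1, e2, e3, e4] at heq ⊢ <;>
            first | rfl | exact absurd heq ‹_› | exact absurd heq.symm ‹_›
    rcases le_total m1 m2 with h | h
    · exact key m1 m2 hm1 hm2 heq h
    · exact (key m2 m1 hm2 hm1 heq.symm h).symm
  · intro x y hxy
    have hP1 : G.Adj (g 0) (g 5) := by
      have h := hadj 0 (by omega)
      rw [hV0] at h
      rw [e0, e5 5 le_rfl]
      simpa using h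
    have hP2 : G.Adj (g (dd+3)) (g 1) := by
      have h := hadj (dd - 1) (by omega)
      have h2 : dd - 1 + 1 = dd := by omega
      rw [h2, hVd] at h
      rw [e1, e5 (dd+3) (by omega)]
      have h3 : dd + 3 - 4 = dd - 1 := by omega
      rw [h3]
      exact h
    rcases theta4_adj hxy with h|h|h|h|h|h|h|h|h
    · rw [Sym2.eq_iff] at h
      rcases h with ⟨hx, hy⟩ | ⟨hx, hy⟩ <;> subst hx <;> subst hy
      · rw [e0, e2]; exact hau
      · rw [e0, e2]; exact hau.symm
    · rw [Sym2.eq_iff] at h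
      rcases h with ⟨hx, hy⟩ | ⟨hx, hy⟩ <;> subst hx <;> subst hy
      · rw [e1, e2]; exact hav
      · rw [e1, e2]; exact hav.symm
    · rw [Sym2.eq_iff] at h
      rcases h with ⟨hx, hy⟩ | ⟨hx, hy⟩ <;> subst hx <;> subst hy
      · rw [e0, e3]; exact hbu
      · rw [e0, e3]; exact hbu.symm
    · rw [Sym2.eq_iff] at h
      rcases h with ⟨hx, hy⟩ | ⟨hx, hy⟩ <;> subst hx <;> subst hy
      · rw [e1, e3]; exact hbv
      · rw [e1, e3]; exact hbv.symm
    · rw [Sym2.eq_iff] at h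
      rcases h with ⟨hx, hy⟩ | ⟨hx, hy⟩ <;> subst hx <;> subst hy
      · rw [e0, e4]; exact hcu
      · rw [e0, e4]; exact hcu.symm
    · rw [Sym2.eq_iff] at h
      rcases h with ⟨hx, hy⟩ | ⟨hx, hy⟩ <;> subst hx <;> subst hy
      · rw [e1, e4]; exact hcv
      · rw [e1, e4]; exact hcv.symm
    · rw [Sym2.eq_iff] at h
      rcases h with ⟨hx, hy⟩ | ⟨hx, hy⟩ <;> subst hx <;> subst hy
      · exact hP1
      · exact hP1.symm
    · rw [Sym2.eq_iff] at h
      rcases h with ⟨hx, hy⟩ | ⟨hx, hy⟩ <;> subst hx <;> subst hy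
      · exact hP2
      · exact hP2.symm
    · obtain ⟨i, hi1, hi2, h⟩ := h
      rw [Sym2.eq_iff] at h
      have key : G.Adj (g i) (g (i+1)) := by
        rw [e5 _ hi1, e5 _ (by omega : 5 ≤ i + 1)]
        have h3 : i + 1 - 4 = (i - 4) + 1 := by omega
        rw [h3]
        exact hadj (i - 4) (by omega)
      rcases h with ⟨hx, hy⟩ | ⟨hx, hy⟩ <;> subst hx <;> subst hy
      · exact key
      · exact key.symm


lemma cycle_step {X Y : Set V}
    (hdeg : ∀ t ∈ X, ∃ a' b', a' ≠ b' ∧ a' ∈ Y ∧ b' ∈ Y ∧ G.Adj t a' ∧ G.Adj t b')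
    {a t : V} (p : G.Walk a t) (hp : p.IsPath)
    (hsupY : ∀ z ∈ p.support, z ∈ Y) (htX : t ∈ X)
    (hinv : ∀ z ∈ Y, z ∉ X → z ∈ p.support) :
    (∃ c n, IsCycleOn G c n ∧ 3 ≤ n ∧ ∀ i, i < n → c i ∈ Y) ∨
    (∃ (t' : V) (p' : G.Walk a t'), p'.IsPath ∧ (∀ z ∈ p'.support, z ∈ Y) ∧ t' ∈ X ∧
      (∀ z ∈ Y, z ∉ X → z ∈ p'.support) ∧ p'.support.length = p.support.length + 1) := by
  classical
  obtain ⟨a', b', hne, haY, hbY, hta, htb⟩ := hdeg t htX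
  set pen := p.getVert (p.length - 1) with hpen
  set c' := if a' = pen then b' else a' with hc'
  have hcY : c' ∈ Y := by rw [hc']; split_ifs <;> assumption
  have htc : G.Adj t c' := by rw [hc']; split_ifs <;> assumption
  have hcpen : c' ≠ pen := by
    rw [hc']; split_ifs with h
    · rw [← h]; exact hne.symm
    · exact h
  have hct : c' ≠ t := htc.ne'
  by_cases hcs : c' ∈ p.support
  · left
    obtain ⟨i, hgi, hi⟩ := Walk.mem_support_iff_exists_getVert.mp hcs
    have hil : i ≠ p.length := by
      intro h; rw [h, Walk.getVert_length] at hgi; exact hct hgi.symm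
    have hip : i ≠ p.length - 1 := by
      intro h; rw [h] at hgi; exact hcpen hgi.symm
    have hi2 : i + 2 ≤ p.length := by omega
    refine ⟨fun j => p.getVert (i + j), p.length - i + 1, ⟨?_, ?_, ?_⟩, by omega, ?_⟩
    · intro j hj
      show G.Adj (p.getVert (i + j)) (p.getVert (i + (j + 1)))
      have h1 : i + (j + 1) = (i + j) + 1 := by omega
      rw [h1]
      exact p.adj_getVert_succ (by omega)
    · show G.Adj (p.getVert (i + (p.length - i + 1 - 1))) (p.getVert (i + 0))
      have h1 : i + (p.length - i + 1 - 1) = p.length := by omega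
      rw [h1, Walk.getVert_length]
      have h2 : i + 0 = i := by omega
      rw [h2, hgi]
      exact htc
    · intro j1 hj1 j2 hj2 heq
      simp only [Set.mem_Iio] at hj1 hj2
      have := getVert_injOn' hp (i + j1) (by omega) (i + j2) (by omega) heq
      omega
    · intro j hj
      exact hsupY _ (getVert_mem_support' p (i + j) (by omega))
  · right
    have hcX : c' ∈ X := by
      by_contra h
      exact hcs (hinv c' hcY h)
    refine ⟨c', p.concat htc, ?_, ?_, hcX, ?_, ?_⟩
    · rw [← Walk.isPath_reverse_iff, Walk.reverse_concat]
      exact (p.isPath_reverse_iff.mpr hp).cons (by simpa using hcs)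
    · intro z hz
      rw [Walk.support_concat] at hz
      rcases List.mem_append.mp hz with h | h
      · exact hsupY _ h
      · rw [List.mem_singleton.mp h]; exact hcY
    · intro z hz hzX
      rw [Walk.support_concat]
      exact List.mem_append.mpr (Or.inl (hinv z hz hzX))
    · rw [Walk.support_concat, List.length_append, List.length_singleton]

lemma cycle_extract [Fintype V] {X Y : Set V}
    (hdeg : ∀ t ∈ X, ∃ a' b', a' ≠ b' ∧ a' ∈ Y ∧ b' ∈ Y ∧ G.Adj t a' ∧ G.Adj t b')
    {a t0 : V} (p0 : G.Walk a t0) (hp0 : p0.IsPath)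
    (hsupY : ∀ z ∈ p0.support, z ∈ Y) (ht0 : t0 ∈ X)
    (hinv : ∀ z ∈ Y, z ∉ X → z ∈ p0.support) :
    ∃ c n, IsCycleOn G c n ∧ 3 ≤ n ∧ ∀ i, i < n → c i ∈ Y := by
  classical
  have main : ∀ fuel (t : V) (p : G.Walk a t), p.IsPath → (∀ z ∈ p.support, z ∈ Y) →
      t ∈ X → (∀ z ∈ Y, z ∉ X → z ∈ p.support) →
      Fintype.card V ≤ p.support.length + fuel →
      ∃ c n, IsCycleOn G c n ∧ 3 ≤ n ∧ ∀ i, i < n → c i ∈ Y := by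
    intro fuel
    induction fuel with
    | zero =>
      intro t p hp h1 h2 h3 hcard
      rcases cycle_step hdeg p hp h1 h2 h3 with h | ⟨t', p', hp', _, _, _, hlen⟩
      · exact h
      · exfalso
        have := hp'.support_nodup.length_le_card
        omega
    | succ fuel ih =>
      intro t p hp h1 h2 h3 hcard
      rcases cycle_step hdeg p hp h1 h2 h3 with h | ⟨t', p', hp', h1', h2', h3', hlen⟩
      · exact h
      · exact ih t' p' hp' h1' h2' h3' (by omega)
  exact main (Fintype.card V) t0 p0 hp0 hsupY ht0 hinv (by omega)


lemma exit_walk {Z : Set V} : ∀ N {a b : V} (p : G.Walk a b), p.length ≤ N → p.IsPath →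
    a ∈ Z → b ∉ Z →
    ∃ (a' : V) (q : G.Walk a' b), q.IsPath ∧ a' ∈ Z ∧
      (∀ i, 0 < i → i ≤ q.length → q.getVert i ∉ Z) ∧ ∀ z ∈ q.support, z ∈ p.support := by
  classical
  intro N
  induction N with
  | zero =>
    intro a b p hl hp ha hb
    have := endpoints_eq_of_length_zero p (by omega)
    exact absurd (this ▸ ha) hb
  | succ N ih =>
    intro a b p hl hp ha hb
    by_cases hall : ∀ i, 0 < i → i ≤ p.length → p.getVert i ∉ Z
    · exact ⟨a, p, hp, ha, hall, fun z hz => hz⟩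
    · push_neg at hall
      obtain ⟨i, hi0, hil, hiZ'⟩ := hall
      set z := p.getVert i with hzdef
      have hzs : z ∈ p.support := getVert_mem_support' p i hil
      have hza : z ≠ a := by
        intro h
        have h2 : p.getVert i = p.getVert 0 := by
          rw [p.getVert_zero, ← hzdef]; exact h
        have := getVert_injOn' hp i hil 0 (by omega) h2
        omega
      set q' := p.dropUntil z hzs with hq'def
      have hq'p : q'.IsPath := hp.dropUntil hzs
      set tk := p.takeUntil z hzs with htkdef
      have hlen : tk.length + q'.length = p.length := by
        have := congrArg Walk.length (p.take_spec hzs)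
        rwa [Walk.length_append] at this
      have htake : 1 ≤ tk.length := by
        by_contra h
        exact hza (endpoints_eq_of_length_zero tk (by omega)).symm
      obtain ⟨a', q, hq, ha', hint, hsub⟩ := ih q' (by omega) hq'p hiZ' hb
      exact ⟨a', q, hq, ha', hint, fun y hy => p.support_dropUntil_subset hzs (hsub y hy)⟩

lemma gamma_final [Fintype V]
    (hG : ∀ n k r : ℕ, 4 ≤ n → Even n → 4 ≤ k → Even k → ¬ ContainsSub G (gammaG n k r))
    {c : ℕ → V} {n : ℕ} (hc : IsCycleOn G c n) (hn : 4 ≤ n) (hne : Even n)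
    {A : Set V} {u v y1 y2 : V}
    (hcA : ∀ i, i < n → c i ∈ A ∪ {u})
    (hvA : v ∉ A ∪ {u}) (hy1A : y1 ∉ A ∪ {u}) (hy2A : y2 ∉ A ∪ {u})
    (huy1 : G.Adj u y1) (hvy1 : G.Adj v y1) (huy2 : G.Adj u y2) (hvy2 : G.Adj v y2)
    (huv : u ≠ v) (hy12 : y1 ≠ y2)
    (W : G.Walk (c 0) u) (hWp : W.IsPath) (hWA : ∀ z ∈ W.support, z ∈ A ∪ {u}) : False := by
  classical
  set d : ℕ → V := fun j => if j = 0 then u else if j = 1 then y1 else if j = 2 then v else y2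
    with hddef
  have hd : IsCycleOn G d 4 := four_cycle huy1 hvy1 huy2 hvy2 huv hy12
  have hdmem : ∀ j, j < 4 → d j = u ∨ d j = y1 ∨ d j = v ∨ d j = y2 := by
    intro j hj
    interval_cases j <;> simp [hddef]
  have hd0 : d 0 = u := by simp [hddef]
  by_cases hu : ∃ i0, i0 < n ∧ c i0 = u
  · obtain ⟨i0, hi0, hci0⟩ := hu
    set c' : ℕ → V := fun i => c ((i + i0) % n) with hc'def
    have hc' : IsCycleOn G c' n := hc.rotate i0 hi0
    have hc'0 : c' 0 = u := by
      simp only [hc'def, Nat.zero_add]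
      rw [Nat.mod_eq_of_lt hi0]
      exact hci0
    have hc'A : ∀ i, i < n → c' i ∈ A ∪ {u} := fun i hi =>
      hcA _ (Nat.mod_lt _ (by omega))
    have hcon : ContainsSub G (gammaG n 4 0) := by
      apply gamma_embed (p := fun _ => u) hc' hd hn (by norm_num)
      · exact hc'0.symm
      · exact hd0.symm
      · intro j hj; omega
      · intro j1 hj1 j2 hj2 _
        simp only [Set.mem_Iic, Nat.le_zero] at hj1 hj2
        omega
      · intro j hj hj2; omega
      · intro j hj; omega
      · intro i hi j hj heq
        refine ⟨rfl, ?_, ?_⟩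
        · have hdu : d j = u := by
            rcases hdmem j hj with h | h | h | h
            · exact h
            · exfalso; rw [h] at heq; exact hy1A (heq ▸ hc'A i hi)
            · exfalso; rw [h] at heq; exact hvA (heq ▸ hc'A i hi)
            · exfalso; rw [h] at heq; exact hy2A (heq ▸ hc'A i hi)
          have : c' i = c' 0 := by rw [hc'0, heq, hdu]
          have := hc'.2.2 (Set.mem_Iio.mpr hi) (Set.mem_Iio.mpr (by omega : (0:ℕ) < n)) this
          exact this
        · rcases hdmem j hj with h | h | h | h
          · -- d j = u : show j = 0
            by_contra hj0
            have : j = 1 ∨ j = 2 ∨ j = 3 := by omega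
            rcases this with h' | h' | h' <;> subst h' <;> simp [hddef] at h
            · exact huy1.ne h.symm
            · exact huv h.symm
            · exact huy2.ne h.symm
          · exfalso; rw [h] at heq; exact hy1A (heq ▸ hc'A i hi)
          · exfalso; rw [h] at heq; exact hvA (heq ▸ hc'A i hi)
          · exfalso; rw [h] at heq; exact hy2A (heq ▸ hc'A i hi)
    exact hG n 4 0 hn hne (by norm_num) (by decide) hcon
  · -- u not on the cycle
    push_neg at hu
    have hc0Z : c 0 ∈ {z | ∃ i, i < n ∧ c i = z} := ⟨0, by omega, rfl⟩
    have huZ : u ∉ {z : V | ∃ i, i < n ∧ c i = z} := by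
      rintro ⟨i, hi, hci⟩
      exact hu i hi hci
    obtain ⟨z1, q, hqp, hz1, hqint, hqsub⟩ :=
      exit_walk (Z := {z | ∃ i, i < n ∧ c i = z}) W.length W le_rfl hWp hc0Z huZ
    obtain ⟨i0, hi0, hci0⟩ := hz1
    set c' : ℕ → V := fun i => c ((i + i0) % n) with hc'def
    have hc' : IsCycleOn G c' n := hc.rotate i0 hi0
    have hc'0 : c' 0 = z1 := by
      simp only [hc'def, Nat.zero_add]
      rw [Nat.mod_eq_of_lt hi0]
      exact hci0
    have hc'A : ∀ i, i < n → c' i ∈ A ∪ {u} := fun i hi => hcA _ (Nat.mod_lt _ (by omega))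
    have hc'Z : ∀ i, i < n → c' i ∈ {z : V | ∃ i, i < n ∧ c i = z} :=
      fun i hi => ⟨(i + i0) % n, Nat.mod_lt _ (by omega), rfl⟩
    have hr1 : 1 ≤ q.length := by
      by_contra h
      have := endpoints_eq_of_length_zero q (by omega)
      exact huZ (this ▸ ⟨i0, hi0, hci0⟩)
    have hqA : ∀ j, j ≤ q.length → q.getVert j ∈ A ∪ {u} :=
      fun j hj => hWA _ (hqsub _ (getVert_mem_support' q j hj))
    have hqend : q.getVert q.length = u := q.getVert_length
    have hqne_u : ∀ j, j < q.length → q.getVert j ≠ u := by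
      intro j hj h
      have := getVert_injOn' hqp j (by omega) q.length le_rfl (by rw [h, hqend])
      omega
    have hcon : ContainsSub G (gammaG n 4 q.length) := by
      apply gamma_embed (p := fun j => q.getVert j) hc' hd hn (by norm_num)
      · rw [q.getVert_zero, hc'0]
      · rw [hqend, hd0]
      · intro j hj; exact q.adj_getVert_succ hj
      · intro j1 hj1 j2 hj2 heq
        exact getVert_injOn' hqp j1 hj1 j2 hj2 heq
      · intro j hj0 hjr i hi heq
        exact (hqint j hj0 hjr) (heq ▸ hc'Z i hi)
      · intro j hj i hi heq
        rcases hdmem i hi with h | h | h | h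
        · rw [h] at heq; exact hqne_u j hj heq
        · rw [h] at heq; exact hy1A (heq ▸ hqA j (by omega))
        · rw [h] at heq; exact hvA (heq ▸ hqA j (by omega))
        · rw [h] at heq; exact hy2A (heq ▸ hqA j (by omega))
      · intro i hi j hj heq
        exfalso
        rcases hdmem j hj with h | h | h | h
        · rw [h] at heq; exact huZ (heq ▸ hc'Z i hi)
        · rw [h] at heq; exact hy1A (heq ▸ hc'A i hi)
        · rw [h] at heq; exact hvA (heq ▸ hc'A i hi)
        · rw [h] at heq; exact hy2A (heq ▸ hc'A i hi)
    exact hG n 4 q.length hn hne (by norm_num) (by decide) hcon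

end ThetaAux

set_option maxHeartbeats 2000000 in
open ThetaAux in
/-- If `H` is a connected bipartite graph with minimum degree at least 2 which is not
isomorphic to any `K_{2,m}` (`m ≥ 1`), contains `K_{2,4} = θ_{2,2,2,2}` as a subgraph
and contains no `Γ_{2p,2q,r}` (`p,q ≥ 2`, `r ≥ 0`) as a partial induced subgraph,
then `H` contains `θ_{2,2,2,2m}` for some `m ≥ 2` as a partial induced subgraph. -/
theorem contains_theta4 {V : Type*} [Fintype V] (H : SimpleGraph V)
    [DecidableRel H.Adj]
    (hconn : H.Connected)
    (hbip : ∃ s : Set V, ∀ u w : V, H.Adj u w → (u ∈ s ↔ w ∉ s))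
    (hmin : ∀ v : V, 2 ≤ H.degree v)
    (hK2m : ∀ m : ℕ, 1 ≤ m → IsEmpty (H ≃g completeBipartiteGraph (Fin 2) (Fin m)))
    (hK24 : ContainsSub H (completeBipartiteGraph (Fin 2) (Fin 4)))
    (hGamma : ∀ p q r : ℕ, 2 ≤ p → 2 ≤ q → ¬ ContainsSub H (gammaG (2 * p) (2 * q) r)) :
    ∃ m : ℕ, 2 ≤ m ∧ ContainsSub H (theta4 (2 * m)) := by
  classical
  obtain ⟨s, hs⟩ := hbip
  obtain ⟨f, finj, fadj⟩ := hK24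
  set u : V := f (Sum.inl 0) with hudef
  set v : V := f (Sum.inl 1) with hvdef
  set x : Fin 4 → V := fun i => f (Sum.inr i) with hxdef
  have hsupK : ∀ z : Fin 2 ⊕ Fin 4, z ∈ (completeBipartiteGraph (Fin 2) (Fin 4)).support := by
    intro z
    rcases z with a | b
    · exact ⟨Sum.inr 0, by simp [completeBipartiteGraph]⟩
    · exact ⟨Sum.inl 0, by simp [completeBipartiteGraph]⟩
  have finj' : ∀ z1 z2, f z1 = f z2 → z1 = z2 := fun z1 z2 h => finj (hsupK z1) (hsupK z2) h
  have hux : ∀ i, H.Adj u (x i) := fun i => fadj _ _ (by simp [completeBipartiteGraph])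
  have hvx : ∀ i, H.Adj v (x i) := fun i => fadj _ _ (by simp [completeBipartiteGraph])
  have huv : u ≠ v := by
    intro h
    have := finj' (Sum.inl 0) (Sum.inl 1) h
    simp at this
  have hxinj : ∀ i j, x i = x j → i = j := by
    intro i j h
    have := finj' (Sum.inr i) (Sum.inr j) h
    simpa using this
  have hnuv : ¬ H.Adj u v := by
    intro h
    have h1 := hs _ _ (hux 0)
    have h2 := hs _ _ (hvx 0)
    have h3 := hs _ _ h
    tauto
  have hG' : ∀ n k r : ℕ, 4 ≤ n → Even n → 4 ≤ k → Even k →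
      ¬ ContainsSub H (gammaG n k r) := by
    intro n k r hn hne hk hke hcon
    rw [Nat.even_iff] at hne hke
    have h1 : n = 2 * (n / 2) := by omega
    have h2 : k = 2 * (k / 2) := by omega
    exact hGamma (n / 2) (k / 2) r (by omega) (by omega) (by rw [← h1, ← h2]; exact hcon)
  -- no two distinct common neighbors of u,v are connected avoiding u,v
  have noTwoS : ∀ N (a b : V) (p : H.Walk a b), p.length ≤ N → H.Adj u a → H.Adj v a →
      H.Adj u b → H.Adj v b → a ≠ b → u ∉ p.support → v ∉ p.support → False := by
    intro N
    induction N with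
    | zero =>
      intro a b p hl _ _ _ _ hab _ _
      exact hab (endpoints_eq_of_length_zero p (by omega))
    | succ N ih =>
      intro a b p hl hua hva hub hvb hab hpu hpv
      set q := p.bypass with hqdef
      have hq : q.IsPath := p.bypass_isPath
      have hqsub : q.support ⊆ p.support := p.support_bypass_subset
      have hqu : u ∉ q.support := fun h => hpu (hqsub h)
      have hqv : v ∉ q.support := fun h => hpv (hqsub h)
      have hqlen : q.length ≤ N + 1 := le_trans p.length_bypass_le hl
      have hqa : q.getVert 0 = a := q.getVert_zero
      have hqb : q.getVert q.length = b := q.getVert_length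
      by_cases hin : ∃ i, 0 < i ∧ i < q.length ∧ H.Adj u (q.getVert i) ∧ H.Adj v (q.getVert i)
      · obtain ⟨i, hi0, hil, hziu, hziv⟩ := hin
        have hzs : q.getVert i ∈ q.support := getVert_mem_support' q i (by omega)
        have hza : q.getVert i ≠ a := by
          intro h
          have h2 : q.getVert i = q.getVert 0 := by rw [hqa]; exact h
          have := getVert_injOn' hq i (by omega) 0 (by omega) h2
          omega
        have htkp : (q.takeUntil _ hzs).IsPath := hq.takeUntil hzs
        have hlen2 : (q.takeUntil _ hzs).length + (q.dropUntil _ hzs).length = q.length := by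
          have := congrArg Walk.length (q.take_spec hzs)
          rwa [Walk.length_append] at this
        have hdrop1 : 1 ≤ (q.dropUntil _ hzs).length := by
          by_contra h
          have h2 := endpoints_eq_of_length_zero (q.dropUntil _ hzs) (by omega)
          have h3 : q.getVert i = q.getVert q.length := by rw [hqb]; exact h2
          have := getVert_injOn' hq i (by omega) q.length le_rfl h3
          omega
        exact ih a (q.getVert i) (q.takeUntil _ hzs) (by omega) hua hva hziu hziv
          (Ne.symm hza)
          (fun h => hqu (q.support_takeUntil_subset hzs h))
          (fun h => hqv (q.support_takeUntil_subset hzs h))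
      · push_neg at hin
        have hlen1 : 1 ≤ q.length := by
          by_contra h
          exact hab (endpoints_eq_of_length_zero q (by omega))
        have hsab : a ∈ s ↔ b ∈ s := by
          have h1 := hs _ _ hua
          have h2 := hs _ _ hub
          tauto
        have heven : Even q.length := (walk_parity hs q).mp hsab
        have hqlen2 : 2 ≤ q.length := by
          obtain ⟨t, ht⟩ := heven; omega
        -- pick two x's avoiding a,b
        have hpick : ∃ i1 i2 : Fin 4, i1 ≠ i2 ∧ x i1 ≠ a ∧ x i1 ≠ b ∧ x i2 ≠ a ∧ x i2 ≠ b := by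
          have hcard : (Finset.univ.filter (fun i : Fin 4 => x i = a ∨ x i = b)).card ≤ 2 := by
            refine le_trans (Finset.card_le_card_of_injOn (t := ({a, b} : Finset V)) x ?_ ?_) ?_
            · intro i hi
              simp only [Finset.mem_coe, Finset.mem_filter] at hi
              rcases hi.2 with h | h <;> simp [h]
            · intro i _ j _ h
              exact hxinj i j h
            · exact le_trans (Finset.card_insert_le _ _) (by simp)
          have htot := Finset.card_filter_add_card_filter_not
            (s := (Finset.univ : Finset (Fin 4))) (p := fun i : Fin 4 => x i = a ∨ x i = b)
          have huniv : (Finset.univ : Finset (Fin 4)).card = 4 := by simp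
          obtain ⟨i1, hi1, i2, hi2, hne⟩ := Finset.one_lt_card.mp
            (by omega : 1 < (Finset.univ.filter (fun i : Fin 4 => ¬(x i = a ∨ x i = b))).card)
          simp only [Finset.mem_filter, not_or] at hi1 hi2
          exact ⟨i1, i2, hne, hi1.2.1, hi1.2.2, hi2.2.1, hi2.2.2⟩
        obtain ⟨i1, i2, hi12, hxa1, hxb1, hxa2, hxb2⟩ := hpick
        have hx12 : x i1 ≠ x i2 := fun h => hi12 (hxinj _ _ h)
        -- the two cycles
        set n1 := q.length + 2 with hn1def
        set cyc : ℕ → V := fun i => if i = 0 then u else q.getVert (i - 1) with hcycdef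
        have hcycval : ∀ i, 1 ≤ i → cyc i = q.getVert (i - 1) := by
          intro i hi
          simp only [hcycdef]
          rw [if_neg (by omega)]
        have hcyc0 : cyc 0 = u := by simp [hcycdef]
        have hcyc : IsCycleOn H cyc n1 := by
          refine ⟨?_, ?_, ?_⟩
          · intro i hi
            by_cases h0 : i = 0
            · subst h0
              rw [hcyc0, hcycval 1 le_rfl]
              have h1 : (1:ℕ) - 1 = 0 := rfl
              rw [h1, hqa]
              exact hua
            · rw [hcycval i (by omega), hcycval (i+1) (by omega)]
              have h2 : i + 1 - 1 = (i - 1) + 1 := by omega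
              rw [h2]
              exact q.adj_getVert_succ (by omega)
          · rw [hcycval (n1 - 1) (by omega), hcyc0]
            have h2 : n1 - 1 - 1 = q.length := by omega
            rw [h2, hqb]
            exact hub.symm
          · intro j1 hj1 j2 hj2 heq
            simp only [Set.mem_Iio] at hj1 hj2
            by_cases h1 : j1 = 0 <;> by_cases h2 : j2 = 0
            · omega
            · exfalso
              rw [h1, hcyc0, hcycval j2 (by omega)] at heq
              exact hqu (heq ▸ getVert_mem_support' q (j2-1) (by omega))
            · exfalso
              rw [h2, hcyc0, hcycval j1 (by omega)] at heq
              exact hqu (heq.symm ▸ getVert_mem_support' q (j1-1) (by omega))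
            · rw [hcycval j1 (by omega), hcycval j2 (by omega)] at heq
              have := getVert_injOn' hq (j1-1) (by omega) (j2-1) (by omega) heq
              omega
        have hqx : ∀ k, k ≤ q.length → ∀ i : Fin 4, x i ≠ a → x i ≠ b →
            q.getVert k ≠ x i := by
          intro k hk i ha' hb' heq
          by_cases h0 : k = 0
          · rw [h0, hqa] at heq
            exact ha' heq.symm
          · by_cases hl' : k = q.length
            · rw [hl', hqb] at heq
              exact hb' heq.symm
            · exact (hin k (by omega) (by omega) (by rw [heq]; exact hux i))
                (by rw [heq]; exact hvx i)
        set d : ℕ → V := fun j => if j = 0 then u else if j = 1 then x i1 else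
          if j = 2 then v else x i2 with hddef
        have hd : IsCycleOn H d 4 :=
          four_cycle (hux i1) (hvx i1) (hux i2) (hvx i2) huv hx12
        have hdmem : ∀ j, j < 4 → d j = u ∨ d j = x i1 ∨ d j = v ∨ d j = x i2 := by
          intro j hj
          interval_cases j <;> simp [hddef]
        have hd0 : d 0 = u := by simp [hddef]
        have hcon : ContainsSub H (gammaG n1 4 0) := by
          apply gamma_embed (p := fun _ => u) hcyc hd (by omega) (by norm_num)
          · exact hcyc0.symm
          · exact hd0.symm
          · intro j hj; omega
          · intro j1 hj1 j2 hj2 _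
            simp only [Set.mem_Iic, Nat.le_zero] at hj1 hj2
            omega
          · intro j hj hj2; omega
          · intro j hj; omega
          · intro i hi j hj heq
            have hi0 : i = 0 := by
              by_contra h0
              rw [hcycval i (by omega)] at heq
              rcases hdmem j hj with h | h | h | h <;> rw [h] at heq
              · exact hqu (by rw [← heq]; exact getVert_mem_support' q (i-1) (by omega))
              · exact hqx (i-1) (by omega) i1 hxa1 hxb1 heq
              · exact hqv (by rw [← heq]; exact getVert_mem_support' q (i-1) (by omega))
              · exact hqx (i-1) (by omega) i2 hxa2 hxb2 heq
            subst hi0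
            rw [hcyc0] at heq
            have hj0 : j = 0 := by
              by_contra h0
              have h3 : j = 1 ∨ j = 2 ∨ j = 3 := by omega
              rcases h3 with h' | h' | h'
              · subst h'
                rw [show d 1 = x i1 by simp [hddef]] at heq
                exact (hux i1).ne heq
              · subst h'
                rw [show d 2 = v by simp [hddef]] at heq
                exact huv heq
              · subst h'
                rw [show d 3 = x i2 by simp [hddef]] at heq
                exact (hux i2).ne heq
            exact ⟨rfl, rfl, hj0⟩
        exact hG' n1 4 0 (by omega)
          (by obtain ⟨t, ht⟩ := heven; exact ⟨t+1, by omega⟩) (by norm_num) (by decide) hcon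
  have noTwoS' : ∀ (a b : V) (p : H.Walk a b), H.Adj u a → H.Adj v a → H.Adj u b →
      H.Adj v b → a ≠ b → u ∉ p.support → v ∉ p.support → False :=
    fun a b p => noTwoS p.length a b p le_rfl
  -- existence of a vertex which is not a common neighbor of u,v
  have hw : ∃ w : V, w ≠ u ∧ w ≠ v ∧ ¬(H.Adj u w ∧ H.Adj v w) := by
    by_contra hcon
    push_neg at hcon
    have hall : ∀ z : V, z ≠ u → z ≠ v → H.Adj u z ∧ H.Adj v z := by
      intro z h1 h2
      exact hcon z h1 h2
    set m := Fintype.card {z : V // z ≠ u ∧ z ≠ v} with hmdef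
    have e0 : {z : V // z ≠ u ∧ z ≠ v} ≃ Fin m := Fintype.equivFin _
    have hm1 : 1 ≤ m := by
      have : Nonempty {z : V // z ≠ u ∧ z ≠ v} := ⟨⟨x 0, (hux 0).ne', (hvx 0).ne'⟩⟩
      rw [hmdef]
      exact Fintype.card_pos
    set eq : V ≃ (Fin 2 ⊕ Fin m) :=
      { toFun := fun z => if hz : z = u then Sum.inl 0 else if hz' : z = v then Sum.inl 1
          else Sum.inr (e0 ⟨z, hz, hz'⟩),
        invFun := fun y => Sum.rec (fun i => if i = 0 then u else v)
          (fun j => (e0.symm j).1) y,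
        left_inv := by
          intro z
          by_cases hz : z = u
          · subst hz; simp
          · by_cases hz' : z = v
            · subst hz'; simp [hz]
            · simp [hz, hz']
        right_inv := by
          intro y
          rcases y with i | j
          · fin_cases i
            · simp
            · simp [Ne.symm huv]
          · have h1 : (e0.symm j).1 ≠ u := (e0.symm j).2.1
            have h2 : (e0.symm j).1 ≠ v := (e0.symm j).2.2
            simp [h1, h2] } with heqdef
    have hval : ∀ z (h1 : z ≠ u) (h2 : z ≠ v), eq z = Sum.inr (e0 ⟨z, h1, h2⟩) := by
      intro z h1 h2
      simp [heqdef, h1, h2]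
    have hvalu : eq u = Sum.inl 0 := by simp [heqdef]
    have hvalv : eq v = Sum.inl 1 := by simp [heqdef, Ne.symm huv]
    have hiso : H ≃g completeBipartiteGraph (Fin 2) (Fin m) := by
      refine ⟨eq, ?_⟩
      intro z1 z2
      by_cases h1 : z1 = u
      · subst h1
        by_cases h2 : z2 = u
        · subst h2
          rw [hvalu]
          simp [completeBipartiteGraph]
        · by_cases h3 : z2 = v
          · subst h3
            rw [hvalu, hvalv]
            simp [completeBipartiteGraph, hnuv]
          · rw [hvalu, hval z2 h2 h3]
            simp [completeBipartiteGraph, (hall z2 h2 h3).1]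
      · by_cases h1' : z1 = v
        · subst h1'
          by_cases h2 : z2 = u
          · subst h2
            rw [hvalv, hvalu]
            simp [completeBipartiteGraph]
            exact fun h => hnuv h.symm
          · by_cases h3 : z2 = v
            · subst h3
              rw [hvalv]
              simp [completeBipartiteGraph]
            · rw [hvalv, hval z2 h2 h3]
              simp [completeBipartiteGraph, (hall z2 h2 h3).2]
        · by_cases h2 : z2 = u
          · subst h2
            rw [hvalu, hval z1 h1 h1']
            simp [completeBipartiteGraph, ((hall z1 h1 h1').1).symm]
          · by_cases h3 : z2 = v
            · subst h3
              rw [hvalv, hval z1 h1 h1']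
              simp [completeBipartiteGraph, ((hall z1 h1 h1').2).symm]
            · rw [hval z1 h1 h1', hval z2 h2 h3]
              simp only [completeBipartiteGraph]
              have ha1 := hs _ _ (hall z1 h1 h1').1
              have ha2 := hs _ _ (hall z2 h2 h3).1
              have hz12 : ¬ H.Adj z1 z2 := by
                intro h
                have := hs _ _ h
                tauto
              simp [hz12]
    exact (hK2m m hm1).false hiso
  obtain ⟨w, hwu, hwv, hwS⟩ := hw
  set T : Set V := {z | ∃ p : H.Walk w z, u ∉ p.support ∧ v ∉ p.support} with hTdef
  have hwT : w ∈ T := by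
    refine ⟨Walk.nil, ?_, ?_⟩ <;> rw [Walk.support_nil, List.mem_singleton]
    · exact fun h => hwu h.symm
    · exact fun h => hwv h.symm
  have hTu : u ∉ T := by
    rintro ⟨p, h1, h2⟩
    exact h1 p.end_mem_support
  have hTv : v ∉ T := by
    rintro ⟨p, h1, h2⟩
    exact h2 p.end_mem_support
  have hTclose : ∀ z ∈ T, ∀ y, H.Adj z y → y ≠ u → y ≠ v → y ∈ T := by
    rintro z ⟨p, h1, h2⟩ y hzy hyu hyv
    refine ⟨p.concat hzy, ?_, ?_⟩ <;> intro h <;> rcases mem_support_concat.mp h with h' | h'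
    · exact h1 h'
    · exact hyu h'.symm
    · exact h2 h'
    · exact hyv h'.symm
  have hTT : ∀ z1 ∈ T, ∀ z2 ∈ T, ∃ p : H.Walk z1 z2, u ∉ p.support ∧ v ∉ p.support := by
    rintro z1 ⟨p1, h1u, h1v⟩ z2 ⟨p2, h2u, h2v⟩
    exact ⟨p1.reverse.append p2, avoid_append (avoid_reverse h1u) h2u,
      avoid_append (avoid_reverse h1v) h2v⟩
  have hTsup : ∀ z1 ∈ T, ∀ (z2 : V) (p : H.Walk z1 z2), u ∉ p.support → v ∉ p.support →
      ∀ z ∈ p.support, z ∈ T := by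
    rintro z1 ⟨p0, h0u, h0v⟩ z2 p hpu hpv z hz
    refine ⟨p0.append (p.takeUntil z hz), ?_, ?_⟩
    · exact avoid_append h0u (fun h => hpu (p.support_takeUntil_subset hz h))
    · exact avoid_append h0v (fun h => hpv (p.support_takeUntil_subset hz h))
  have hST : ∀ z1 ∈ T, ∀ z2 ∈ T, H.Adj u z1 → H.Adj v z1 → H.Adj u z2 → H.Adj v z2 →
      z1 = z2 := by
    intro z1 h1 z2 h2 hu1 hv1 hu2 hv2
    by_contra hne
    obtain ⟨p, hpu, hpv⟩ := hTT z1 h1 z2 h2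
    exact noTwoS' z1 z2 p hu1 hv1 hu2 hv2 hne hpu hpv
  -- three x's outside T
  have h3x : ∃ i1 i2 i3 : Fin 4, i1 ≠ i2 ∧ i1 ≠ i3 ∧ i2 ≠ i3 ∧ x i1 ∉ T ∧ x i2 ∉ T ∧
      x i3 ∉ T := by
    have hbad : (Finset.univ.filter (fun i : Fin 4 => x i ∈ T)).card ≤ 1 := by
      refine Finset.card_le_one.mpr ?_
      intro i hi j hj
      simp only [Finset.mem_filter] at hi hj
      exact hxinj _ _ (hST _ hi.2 _ hj.2 (hux i) (hvx i) (hux j) (hvx j))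
    have htot := Finset.card_filter_add_card_filter_not
      (s := (Finset.univ : Finset (Fin 4))) (p := fun i : Fin 4 => x i ∈ T)
    have huniv : (Finset.univ : Finset (Fin 4)).card = 4 := by simp
    set tg := Finset.univ.filter (fun i : Fin 4 => ¬ x i ∈ T) with htgdef
    have htg3 : 3 ≤ tg.card := by omega
    obtain ⟨i1, hi1, i2, hi2, h12⟩ := Finset.one_lt_card.mp (by omega : 1 < tg.card)
    have h3 : 0 < ((tg.erase i1).erase i2).card := by
      rw [Finset.card_erase_of_mem (Finset.mem_erase.mpr ⟨Ne.symm h12, hi2⟩),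
        Finset.card_erase_of_mem hi1]
      omega
    obtain ⟨i3, hi3⟩ := Finset.card_pos.mp h3
    rw [Finset.mem_erase, Finset.mem_erase] at hi3
    simp only [htgdef, Finset.mem_filter] at hi1 hi2 hi3
    exact ⟨i1, i2, i3, h12, Ne.symm hi3.2.1, Ne.symm hi3.1, hi1.2, hi2.2, hi3.2.2.2⟩
  obtain ⟨i1, i2, i3, h12, h13, h23, hx1T, hx2T, hx3T⟩ := h3x
  have hx12 : x i1 ≠ x i2 := fun h => h12 (hxinj _ _ h)
  have hx13 : x i1 ≠ x i3 := fun h => h13 (hxinj _ _ h)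
  have hx23 : x i2 ≠ x i3 := fun h => h23 (hxinj _ _ h)
  -- two distinct neighbors from min degree
  have h2nb : ∀ t : V, ∃ n1 n2, n1 ≠ n2 ∧ H.Adj t n1 ∧ H.Adj t n2 := by
    intro t
    have hdeg := hmin t
    rw [← SimpleGraph.card_neighborFinset_eq_degree] at hdeg
    obtain ⟨n1, h1, n2, h2, hne⟩ := Finset.one_lt_card.mp (by omega : 1 < (H.neighborFinset t).card)
    rw [SimpleGraph.mem_neighborFinset] at h1 h2
    exact ⟨n1, n2, hne, h1, h2⟩
  by_cases hex : ∃ t1 ∈ T, ∃ t2 ∈ T, t1 ≠ t2 ∧ H.Adj u t1 ∧ H.Adj v t2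
  · -- main theta construction
    obtain ⟨t1, ht1, t2, ht2, htne, hut1, hvt2⟩ := hex
    obtain ⟨p0, h0u, h0v⟩ := hTT t1 ht1 t2 ht2
    set P' := p0.bypass with hP'def
    have hP'p : P'.IsPath := p0.bypass_isPath
    have hP'u : u ∉ P'.support := fun h => h0u (p0.support_bypass_subset h)
    have hP'v : v ∉ P'.support := fun h => h0v (p0.support_bypass_subset h)
    have hP'T : ∀ z ∈ P'.support, z ∈ T := fun z hz => hTsup t1 ht1 t2 P' hP'u hP'v z hz
    have hside1 : t1 ∈ s ↔ t2 ∈ s := by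
      have h1 := hs _ _ hut1
      have h2 := hs _ _ hvt2
      have h3 := hs _ _ (hux 0)
      have h4 := hs _ _ (hvx 0)
      tauto
    have hP'len1 : 1 ≤ P'.length := by
      by_contra h
      exact htne (endpoints_eq_of_length_zero P' (by omega))
    have hP'even : Even P'.length := (walk_parity hs P').mp hside1
    have hP'len2 : 2 ≤ P'.length := by obtain ⟨t, ht⟩ := hP'even; omega
    have hvP' : v ∉ P'.support := hP'v
    obtain ⟨Pc, hPcdef⟩ : ∃ Pc : H.Walk t1 v, Pc = P'.concat hvt2.symm := ⟨_, rfl⟩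
    have hPcp : Pc.IsPath := by rw [hPcdef]; exact isPath_concat hP'p hvt2.symm hvP'
    have huPc : u ∉ Pc.support := by
      rw [hPcdef]
      intro h
      rcases mem_support_concat.mp h with h' | h'
      · exact hP'u h'
      · exact huv h'
    obtain ⟨Pf, hPfdef⟩ : ∃ Pf : H.Walk u v, Pf = Walk.cons hut1 Pc := ⟨_, rfl⟩
    have hPfp : Pf.IsPath := by rw [hPfdef]; exact hPcp.cons huPc
    have hPflen : Pf.length = P'.length + 2 := by
      rw [hPfdef, Walk.length_cons, hPcdef, Walk.length_concat]
    have hPfint : ∀ i, 1 ≤ i → i ≤ Pf.length - 1 → Pf.getVert i ∈ T := by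
      intro i hi1 hi2
      have e1 : Pf.getVert i = Pc.getVert (i - 1) := by
        rw [hPfdef]; exact Walk.getVert_cons Pc hut1 (by omega)
      rw [e1, hPcdef, Walk.concat_eq_append, Walk.getVert_append]
      by_cases hi : i - 1 < P'.length
      · rw [if_pos hi]
        exact hP'T _ (getVert_mem_support' P' _ (by omega))
      · rw [if_neg hi]
        have h2 : i - 1 - P'.length = 0 := by omega
        rw [h2, Walk.getVert_zero]
        exact ht2
    have hPfeven : Even Pf.length := by
      obtain ⟨t, ht⟩ := hP'even
      exact ⟨t + 1, by omega⟩
    have hthm : ContainsSub H (theta4 Pf.length) :=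
      theta_embed Pf hPfp (by omega) rfl (x i1) (x i2) (x i3) hx12 hx13 hx23
        (hux i1) (hvx i1) (hux i2) (hvx i2) (hux i3) (hvx i3)
        (by
          intro i hi1' hi2'
          have hT' := hPfint i hi1' hi2'
          exact ⟨fun h => hx1T (h ▸ hT'), fun h => hx2T (h ▸ hT'),
            fun h => hx3T (h ▸ hT')⟩)
    refine ⟨Pf.length / 2, by omega, ?_⟩
    have heq2 : 2 * (Pf.length / 2) = Pf.length := by
      obtain ⟨t, ht⟩ := hPfeven; omega
    rw [heq2]
    exact hthm
  · -- contradiction cases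
    exfalso
    push_neg at hex
    have huv2 : ∀ t1 ∈ T, ∀ t2 ∈ T, H.Adj u t1 → H.Adj v t2 → t1 = t2 := by
      intro t1 h1 t2 h2 hu1 hv2
      by_contra hne
      exact hex t1 h1 t2 h2 hne hu1 hv2
    have hcross : ∃ td ∈ T, H.Adj u td ∨ H.Adj v td := by
      obtain ⟨pw⟩ := hconn.preconnected u w
      obtain ⟨y, z, hyz, hyT, hzT⟩ := crossing pw hTu hwT
      have hy : y = u ∨ y = v := by
        by_contra h
        push_neg at h
        exact hyT (hTclose z hzT y hyz.symm h.1 h.2)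
      rcases hy with h | h
      · subst h; exact ⟨z, hzT, Or.inl hyz⟩
      · subst h; exact ⟨z, hzT, Or.inr hyz⟩
    have hnotTy : ∀ (z y0 : V), z ∉ T → z ≠ y0 → z ∉ T ∪ {y0} := by
      intro z y0 h1 h2 h
      rcases h with h | h
      · exact h1 h
      · rw [Set.mem_singleton_iff] at h
        exact h2 h
    have hmkW : ∀ (c0 td y0 : V), c0 ∈ T → td ∈ T → H.Adj td y0 →
        ∃ W : H.Walk c0 y0, W.IsPath ∧ ∀ z ∈ W.support, z ∈ T ∪ {y0} := by
      intro c0 td y0 hc0 htd hadj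
      obtain ⟨pc, hpcu, hpcv⟩ := hTT c0 hc0 td htd
      refine ⟨(pc.concat hadj).bypass, Walk.bypass_isPath _, ?_⟩
      intro z hz
      have hz2 := Walk.support_bypass_subset _ hz
      rcases mem_support_concat.mp hz2 with h | h
      · exact Or.inl (hTsup c0 hc0 td pc hpcu hpcv z h)
      · rw [h]; exact Or.inr rfl
    by_cases hAu : ∃ t ∈ T, H.Adj u t
    · by_cases hAv : ∃ t ∈ T, H.Adj v t
      · -- both sides attach, necessarily through a unique vertex ta
        obtain ⟨ta, htaT, htau⟩ := hAu
        obtain ⟨tb, htbT, htbv⟩ := hAv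
        have htab : ta = tb := huv2 ta htaT tb htbT htau htbv
        have htav : H.Adj v ta := by rw [htab]; exact htbv
        have hx0uniq : ∀ t ∈ T, H.Adj u t ∨ H.Adj v t → t = ta := by
          intro t ht h
          rcases h with h | h
          · exact huv2 t ht ta htaT h htav
          · exact (huv2 ta htaT t ht htau h).symm
        have hwta : w ≠ ta := by
          intro h
          exact hwS ⟨by rw [h]; exact htau, by rw [h]; exact htav⟩
        have hdeg : ∀ t ∈ (T \ {ta} : Set V), ∃ a' b', a' ≠ b' ∧ a' ∈ T ∧ b' ∈ T ∧
            H.Adj t a' ∧ H.Adj t b' := by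
          rintro t ⟨htT, htne⟩
          simp only [Set.mem_singleton_iff] at htne
          obtain ⟨n1, n2, hn12, h1, h2⟩ := h2nb t
          have hmem : ∀ nb, H.Adj t nb → nb ∈ T := by
            intro nb hnb
            have hnbu : nb ≠ u := by
              intro h
              exact htne (hx0uniq t htT (Or.inl (by rw [← h]; exact hnb.symm)))
            have hnbv : nb ≠ v := by
              intro h
              exact htne (hx0uniq t htT (Or.inr (by rw [← h]; exact hnb.symm)))
            exact hTclose t htT nb hnb hnbu hnbv
          exact ⟨n1, n2, hn12, hmem n1 h1, hmem n2 h2, h1, h2⟩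
        obtain ⟨pw0, hw0u, hw0v⟩ := hTT w hwT ta htaT
        obtain ⟨W0, hW0eq⟩ : ∃ W0 : H.Walk w ta, W0 = pw0.bypass := ⟨_, rfl⟩
        have hW0p : W0.IsPath := by rw [hW0eq]; exact pw0.bypass_isPath
        have hW0u : u ∉ W0.support := by
          rw [hW0eq]; exact fun h => hw0u (pw0.support_bypass_subset h)
        have hW0v : v ∉ W0.support := by
          rw [hW0eq]; exact fun h => hw0v (pw0.support_bypass_subset h)
        have hW0len : 1 ≤ W0.length := by
          by_contra h
          exact hwta (endpoints_eq_of_length_zero W0 (by omega))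
        have htst_adj : H.Adj (W0.getVert (W0.length - 1)) ta := by
          have h1 := W0.adj_getVert_succ (i := W0.length - 1) (by omega)
          have h2 : W0.length - 1 + 1 = W0.length := by omega
          rw [h2, W0.getVert_length] at h1
          exact h1
        have htstT : W0.getVert (W0.length - 1) ∈ T :=
          hTsup w hwT ta W0 hW0u hW0v _ (getVert_mem_support' _ _ (by omega))
        have htstne : W0.getVert (W0.length - 1) ≠ ta := by
          intro h
          have h2 : W0.getVert (W0.length - 1) = W0.getVert W0.length := by
            rw [W0.getVert_length]; exact h
          have := getVert_injOn' hW0p (W0.length - 1) (by omega) W0.length le_rfl h2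
          omega
        obtain ⟨cyc, n, hcyc, hn3, hcycT⟩ := cycle_extract (X := (T \ {ta} : Set V)) (Y := T)
          hdeg (Walk.cons htst_adj.symm Walk.nil)
          (by rw [Walk.cons_isPath_iff]
              exact ⟨Walk.IsPath.nil, by simp [Ne.symm htstne]⟩)
          (by intro z hz
              simp only [Walk.support_cons, Walk.support_nil, List.mem_cons,
                List.mem_singleton, List.not_mem_nil, or_false] at hz
              rcases hz with h | h
              · rw [h]; exact htaT
              · rw [h]; exact htstT)
          (⟨htstT, by simpa using htstne⟩)
          (by intro z hzT hzX
              have hzta : z = ta := by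
                by_contra h
                exact hzX ⟨hzT, by simpa using h⟩
              rw [hzta]
              exact Walk.start_mem_support _)
        have hneven : Even n := hcyc.even hs hn3
        have hn4 : 4 ≤ n := by obtain ⟨t, ht⟩ := hneven; omega
        obtain ⟨W, hWp, hWA⟩ := hmkW (cyc 0) ta u (hcycT 0 (by omega)) htaT htau.symm
        exact gamma_final hG' hcyc hn4 hneven (A := T)
          (fun i hi => Or.inl (hcycT i hi))
          (hnotTy v u hTv (Ne.symm huv))
          (hnotTy (x i1) u hx1T (fun h => (hux i1).ne h.symm))
          (hnotTy (x i2) u hx2T (fun h => (hux i2).ne h.symm))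
          (hux i1) (hvx i1) (hux i2) (hvx i2) huv hx12 W hWp hWA
      · -- only u attaches to T
        obtain ⟨td, htdT, htd⟩ := hcross
        have htdu : H.Adj u td := by
          rcases htd with h | h
          · exact h
          · exact absurd ⟨td, htdT, h⟩ hAv
        have hdeg : ∀ t ∈ T, ∃ a' b', a' ≠ b' ∧ a' ∈ T ∪ {u} ∧ b' ∈ T ∪ {u} ∧
            H.Adj t a' ∧ H.Adj t b' := by
          intro t ht
          obtain ⟨n1, n2, hn12, h1, h2⟩ := h2nb t
          have hmem : ∀ nb, H.Adj t nb → nb ∈ T ∪ {u} := by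
            intro nb hnb
            by_cases h : nb = u
            · rw [h]; exact Or.inr rfl
            · have hnbv : nb ≠ v := by
                intro hv
                exact hAv ⟨t, ht, by rw [← hv]; exact hnb.symm⟩
              exact Or.inl (hTclose t ht nb hnb h hnbv)
          exact ⟨n1, n2, hn12, hmem n1 h1, hmem n2 h2, h1, h2⟩
        obtain ⟨cyc, n, hcyc, hn3, hcycA⟩ := cycle_extract (X := T) (Y := T ∪ {u}) hdeg
          (Walk.cons htdu Walk.nil)
          (by rw [Walk.cons_isPath_iff]
              exact ⟨Walk.IsPath.nil, by simp [htdu.ne]⟩)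
          (by intro z hz
              simp only [Walk.support_cons, Walk.support_nil, List.mem_cons,
                List.mem_singleton, List.not_mem_nil, or_false] at hz
              rcases hz with h | h
              · rw [h]; exact Or.inr rfl
              · rw [h]; exact Or.inl htdT)
          htdT
          (by intro z hzY hzX
              have hzu : z = u := by
                rcases hzY with h | h
                · exact absurd h hzX
                · rwa [Set.mem_singleton_iff] at h
              rw [hzu]
              exact Walk.start_mem_support _)
        have hneven : Even n := hcyc.even hs hn3
        have hn4 : 4 ≤ n := by obtain ⟨t, ht⟩ := hneven; omega
        obtain ⟨W, hWp, hWA⟩ : ∃ W : H.Walk (cyc 0) u, W.IsPath ∧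
            ∀ z ∈ W.support, z ∈ T ∪ {u} := by
          by_cases hc0 : cyc 0 = u
          · refine ⟨(Walk.nil : H.Walk (cyc 0) (cyc 0)).copy rfl hc0, ?_, ?_⟩
            · rw [Walk.isPath_copy]; exact Walk.IsPath.nil
            · intro z hz
              rw [Walk.support_copy, Walk.support_nil, List.mem_singleton] at hz
              rw [hz, ← hc0]
              exact Or.inr (by rw [hc0]; rfl)
          · have hc0T : cyc 0 ∈ T := by
              rcases hcycA 0 (by omega) with h | h
              · exact h
              · exact absurd (by rwa [Set.mem_singleton_iff] at h) hc0
            exact hmkW (cyc 0) td u hc0T htdT htdu.symm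
        exact gamma_final hG' hcyc hn4 hneven (A := T) hcycA
          (hnotTy v u hTv (Ne.symm huv))
          (hnotTy (x i1) u hx1T (fun h => (hux i1).ne h.symm))
          (hnotTy (x i2) u hx2T (fun h => (hux i2).ne h.symm))
          (hux i1) (hvx i1) (hux i2) (hvx i2) huv hx12 W hWp hWA
    · -- only v attaches to T
      obtain ⟨td, htdT, htd⟩ := hcross
      have htdv : H.Adj v td := by
        rcases htd with h | h
        · exact absurd ⟨td, htdT, h⟩ hAu
        · exact h
      have hdeg : ∀ t ∈ T, ∃ a' b', a' ≠ b' ∧ a' ∈ T ∪ {v} ∧ b' ∈ T ∪ {v} ∧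
          H.Adj t a' ∧ H.Adj t b' := by
        intro t ht
        obtain ⟨n1, n2, hn12, h1, h2⟩ := h2nb t
        have hmem : ∀ nb, H.Adj t nb → nb ∈ T ∪ {v} := by
          intro nb hnb
          by_cases h : nb = v
          · rw [h]; exact Or.inr rfl
          · have hnbu : nb ≠ u := by
              intro hv
              exact hAu ⟨t, ht, by rw [← hv]; exact hnb.symm⟩
            exact Or.inl (hTclose t ht nb hnb hnbu h)
        exact ⟨n1, n2, hn12, hmem n1 h1, hmem n2 h2, h1, h2⟩
      obtain ⟨cyc, n, hcyc, hn3, hcycA⟩ := cycle_extract (X := T) (Y := T ∪ {v}) hdeg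
        (Walk.cons htdv Walk.nil)
        (by rw [Walk.cons_isPath_iff]
            exact ⟨Walk.IsPath.nil, by simp [htdv.ne]⟩)
        (by intro z hz
            simp only [Walk.support_cons, Walk.support_nil, List.mem_cons,
              List.mem_singleton, List.not_mem_nil, or_false] at hz
            rcases hz with h | h
            · rw [h]; exact Or.inr rfl
            · rw [h]; exact Or.inl htdT)
        htdT
        (by intro z hzY hzX
            have hzv : z = v := by
              rcases hzY with h | h
              · exact absurd h hzX
              · rwa [Set.mem_singleton_iff] at h
            rw [hzv]
            exact Walk.start_mem_support _)
      have hneven : Even n := hcyc.even hs hn3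
      have hn4 : 4 ≤ n := by obtain ⟨t, ht⟩ := hneven; omega
      obtain ⟨W, hWp, hWA⟩ : ∃ W : H.Walk (cyc 0) v, W.IsPath ∧
          ∀ z ∈ W.support, z ∈ T ∪ {v} := by
        by_cases hc0 : cyc 0 = v
        · refine ⟨(Walk.nil : H.Walk (cyc 0) (cyc 0)).copy rfl hc0, ?_, ?_⟩
          · rw [Walk.isPath_copy]; exact Walk.IsPath.nil
          · intro z hz
            rw [Walk.support_copy, Walk.support_nil, List.mem_singleton] at hz
            rw [hz, ← hc0]
            exact Or.inr (by rw [hc0]; rfl)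
        · have hc0T : cyc 0 ∈ T := by
            rcases hcycA 0 (by omega) with h | h
            · exact h
            · exact absurd (by rwa [Set.mem_singleton_iff] at h) hc0
          exact hmkW (cyc 0) td v hc0T htdT htdv.symm
      exact gamma_final hG' hcyc hn4 hneven (A := T) hcycA
        (hnotTy u v hTu huv)
        (hnotTy (x i1) v hx1T (fun h => (hvx i1).ne h.symm))
        (hnotTy (x i2) v hx2T (fun h => (hvx i2).ne h.symm))
        (hvx i1) (hux i1) (hvx i2) (hux i2) (Ne.symm huv) hx12 W hWp hWA
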